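/- Proposition 7(2): Fix π₀ ∈ (0,1). With W_n(γ, κ) as defined in the context: (i) for n = 0 and every fixed κ > 1, the map γ ↦ W_0(γ, κ) is strictly decreasing on (1, ∞); (ii) for every n ≥ 1 there exists γ̂ = γ̂(n) > 1 such that for every κ > 1, the map γ ↦ W_n(γ, κ) is strictly increasing on (γ̂, ∞); moreover γ̂(n) can be chosen so that γ̂(n) → 1 as n → ∞. -/

import Mathlib

set_option maxHeartbeats 1000000

open Real Set Filter

/-- The sender's equilibrium value `V_n` reparametrized by the signal
informativeness `γ = p/q` and the expected evidence length `κ = 1/(1−p−q)`,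
via `p = γ(κ−1)/((γ+1)κ)`, `q = (κ−1)/((γ+1)κ)`. -/
noncomputable def W (π0 : ℝ) (n : ℕ) (γ κ : ℝ) : ℝ :=
  let p := γ * (κ - 1) / ((γ + 1) * κ)
  let q := (κ - 1) / ((γ + 1) * κ)
  let α := (1 - Real.sqrt (1 - 4 * p * q)) / 2
  1 / (1 + ((1 - π0) / π0) * ((p - α) / (q - α)) * γ ^ (-(n + 1 : ℤ)))

noncomputable def Sf (t γ : ℝ) : ℝ := Real.sqrt ((γ+1)^2 - 4*t^2*γ)

noncomputable def Gf (t : ℝ) (n : ℕ) (γ : ℝ) : ℝ :=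
  (Sf t γ + 2*t*γ - γ - 1) / ((Sf t γ + 2*t - γ - 1) * γ^(n+1))


lemma sig_pos {t γ : ℝ} (ht0 : 0 < t) (ht1 : t < 1) (hγ : 1 < γ) :
    0 < (γ+1)^2 - 4*t^2*γ := by
  nlinarith [sq_nonneg (γ-1), mul_pos (show (0:ℝ) < γ by linarith)
    (show (0:ℝ) < 1 - t^2 by nlinarith)]

lemma S_pos {t γ : ℝ} (ht0 : 0 < t) (ht1 : t < 1) (hγ : 1 < γ) : 0 < Sf t γ :=
  Real.sqrt_pos.2 (sig_pos ht0 ht1 hγ)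

lemma S_sq {t γ : ℝ} (ht0 : 0 < t) (ht1 : t < 1) (hγ : 1 < γ) :
    (Sf t γ)^2 = (γ+1)^2 - 4*t^2*γ :=
  Real.sq_sqrt (sig_pos ht0 ht1 hγ).le

lemma B_pos {t γ : ℝ} (ht0 : 0 < t) (ht1 : t < 1) (hγ : 1 < γ) :
    0 < Sf t γ + 2*t - γ - 1 := by
  have h : γ + 1 - 2*t < Sf t γ := by
    rw [Sf]
    exact (Real.lt_sqrt (by nlinarith)).2 (by
      nlinarith [mul_pos (mul_pos ht0 (show (0:ℝ) < γ+1 by linarith))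
        (show (0:ℝ) < 1-t by linarith)])
  linarith

lemma A_pos {t γ : ℝ} (ht0 : 0 < t) (ht1 : t < 1) (hγ : 1 < γ) :
    0 < Sf t γ + 2*t*γ - γ - 1 := by
  have := B_pos ht0 ht1 hγ; nlinarith

lemma hasDeriv_G {t γ : ℝ} (ht0 : 0 < t) (ht1 : t < 1) (hγ : 1 < γ) (n : ℕ) :
    HasDerivAt (Gf t n)
      ((((2*(γ+1) - 4*t^2) / (2 * Sf t γ) + 2*t - 1) * ((Sf t γ + 2*t - γ - 1) * γ^(n+1)) -
        (Sf t γ + 2*t*γ - γ - 1) * (((2*(γ+1) - 4*t^2) / (2 * Sf t γ) - 1) * γ^(n+1) +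
          (Sf t γ + 2*t - γ - 1) * ((n+1 : ℕ) * γ^n))) /
        ((Sf t γ + 2*t - γ - 1) * γ^(n+1))^2) γ := by
  have hσ := sig_pos ht0 ht1 hγ
  have h1 : HasDerivAt (fun x : ℝ => (x+1)^2 - 4*t^2*x) (2*(γ+1) - 4*t^2) γ := by
    have ha : HasDerivAt (fun x : ℝ => (x+1)^2) (2*(γ+1)) γ := by
      simpa using (((hasDerivAt_id γ).add_const 1).fun_pow 2)
    have hb : HasDerivAt (fun x : ℝ => 4*t^2*x) (4*t^2) γ := by
      simpa using (hasDerivAt_id γ).const_mul (4*t^2)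
    exact ha.sub hb
  have hs : HasDerivAt (fun x => Sf t x) ((2*(γ+1) - 4*t^2) / (2 * Sf t γ)) γ := by
    simpa [Sf] using h1.sqrt (ne_of_gt hσ)
  have hA : HasDerivAt (fun x => Sf t x + 2*t*x - x - 1)
      ((2*(γ+1) - 4*t^2) / (2 * Sf t γ) + 2*t - 1) γ := by
    have h2 : HasDerivAt (fun x : ℝ => 2*t*x) (2*t) γ := by
      simpa using (hasDerivAt_id γ).const_mul (2*t)
    simpa using ((hs.add h2).sub (hasDerivAt_id γ)).sub_const 1
  have hB : HasDerivAt (fun x => Sf t x + 2*t - x - 1)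
      ((2*(γ+1) - 4*t^2) / (2 * Sf t γ) - 1) γ := by
    simpa using (((hs.add_const (2*t)).sub (hasDerivAt_id γ)).sub_const 1)
  have hpow : HasDerivAt (fun x : ℝ => x^(n+1)) ((n+1 : ℕ) * γ^n) γ := by
    simpa using hasDerivAt_pow (n+1) γ
  have hden : HasDerivAt (fun x => (Sf t x + 2*t - x - 1) * x^(n+1))
      (((2*(γ+1) - 4*t^2) / (2 * Sf t γ) - 1) * γ^(n+1) +
        (Sf t γ + 2*t - γ - 1) * ((n+1 : ℕ) * γ^n)) γ := hB.mul hpow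
  have hne : (Sf t γ + 2*t - γ - 1) * γ^(n+1) ≠ 0 :=
    ne_of_gt (mul_pos (B_pos ht0 ht1 hγ) (pow_pos (by linarith) _))
  exact hA.div hden hne

-- core polynomial identity (verified numerically beforehand)
lemma core (s t γ : ℝ) (n : ℕ) (hs2 : s^2 = (γ+1)^2 - 4*t^2*γ) :
    ((γ+1-2*t^2) + (2*t-1)*s) * ((s + 2*t - γ - 1) * γ^(n+1)) -
      (s + 2*t*γ - γ - 1) * (((γ+1-2*t^2) - s) * γ^(n+1) +
        (s + 2*t - γ - 1) * (((n:ℝ)+1) * γ^n) * s)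
    = γ^n * (2*(1-t)*((γ+1)*(2*t*γ*(1+t) + ((n:ℝ)+1)*((γ+1)^2 - 4*t^2*γ))
        - s * (2*t*γ + ((n:ℝ)+1)*(γ+1)^2))) := by
  linear_combination (γ^n * (-(((n:ℝ)+1))*s + 2*t*γ + 2*((n:ℝ)+1)*(γ+1)*(1-t))) * hs2

-- squares identity, n = 0
-- squares identity, general n
lemma sqidn (s t γ : ℝ) (n : ℕ) (hs2 : s^2 = (γ+1)^2 - 4*t^2*γ) :
    (s * (2*t*γ + ((n:ℝ)+1)*(γ+1)^2))^2
      - ((γ+1)*(2*t*γ*(1+t) + ((n:ℝ)+1)*((γ+1)^2 - 4*t^2*γ)))^2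
    = t*(2*t*γ)*(2*(2*t*γ + ((n:ℝ)+1)*(γ+1)^2)*((n:ℝ)*(γ+1)^2 - 2*t*γ)
        - (2*(n:ℝ)+1)^2*t*(2*t*γ)*(γ+1)^2) := by
  linear_combination ((2*t*γ + ((n:ℝ)+1)*(γ+1)^2)^2) * hs2

lemma num_eq {t γ : ℝ} (ht0 : 0 < t) (ht1 : t < 1) (hγ : 1 < γ) (n : ℕ) :
    ((2*(γ+1) - 4*t^2) / (2 * Sf t γ) + 2*t - 1) * ((Sf t γ + 2*t - γ - 1) * γ^(n+1)) -
      (Sf t γ + 2*t*γ - γ - 1) * (((2*(γ+1) - 4*t^2) / (2 * Sf t γ) - 1) * γ^(n+1) +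
        (Sf t γ + 2*t - γ - 1) * ((n+1 : ℕ) * γ^n))
    = γ^n * (2*(1-t)*((γ+1)*(2*t*γ*(1+t) + ((n:ℝ)+1)*((γ+1)^2 - 4*t^2*γ))
        - Sf t γ * (2*t*γ + ((n:ℝ)+1)*(γ+1)^2))) / Sf t γ := by
  have hs := S_pos ht0 ht1 hγ
  have hs2 := S_sq ht0 ht1 hγ
  set s := Sf t γ with hsdef
  rw [eq_div_iff (ne_of_gt hs), ← core s t γ n hs2]
  push_cast
  field_simp
  ring

lemma sqid0 (s t γ : ℝ) (hs2 : s^2 = (γ+1)^2 - 4*t^2*γ) :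
    ((γ+1)*(2*t*γ*(1+t) + ((γ+1)^2 - 4*t^2*γ)))^2 - (s * (2*t*γ + (γ+1)^2))^2
    = t*(2*t*γ)^2*(2*(2*t*γ + (γ+1)^2) + t*(γ+1)^2) := by
  linear_combination (-((2*t*γ + (γ+1)^2)^2)) * hs2


lemma sq_helper1 {a b R : ℝ} (h : a^2 - b^2 = R) (hR : 0 < R) (hsum : 0 < a + b) :
    0 < a - b := by nlinarith

lemma sq_helper2 {a b R : ℝ} (h : b^2 - a^2 = R) (hR : 0 < R) (hb : 0 < b) :
    a - b < 0 := by nlinarith [sq_nonneg (a-b), sq_nonneg (a+b)]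

lemma pos0 {t γ : ℝ} (ht0 : 0 < t) (ht1 : t < 1) (hγ : 1 < γ) :
    0 < (γ+1)*(2*t*γ*(1+t) + ((γ+1)^2 - 4*t^2*γ)) - Sf t γ * (2*t*γ + (γ+1)^2) := by
  have hσ := sig_pos ht0 ht1 hγ
  have hs := S_pos ht0 ht1 hγ
  have hsq := sqid0 (Sf t γ) t γ (S_sq ht0 ht1 hγ)
  have hγ0 : (0:ℝ) < γ := by linarith
  have hQ : 0 < 2*t*γ + (γ+1)^2 := by nlinarith
  have hsum : 0 < (γ+1)*(2*t*γ*(1+t) + ((γ+1)^2 - 4*t^2*γ))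
      + Sf t γ * (2*t*γ + (γ+1)^2) := by
    have := mul_pos hs hQ
    nlinarith
  have hrhs : 0 < t*(2*t*γ)^2*(2*(2*t*γ + (γ+1)^2) + t*(γ+1)^2) := by
    have h1 : 0 < (2*t*γ)^2 := by positivity
    have h2 : 0 < 2*(2*t*γ + (γ+1)^2) + t*(γ+1)^2 := by nlinarith
    exact mul_pos (mul_pos ht0 h1) h2
  exact sq_helper1 hsq (by linarith) hsum

lemma Cpos {t γ : ℝ} (ht0 : 0 < t) (ht1 : t < 1) {n : ℕ} (hn : 1 ≤ n)
    (hγ : 1 + 3/(n:ℝ) < γ) :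
    0 < 2*(2*t*γ + ((n:ℝ)+1)*(γ+1)^2)*((n:ℝ)*(γ+1)^2 - 2*t*γ)
        - (2*(n:ℝ)+1)^2*t*(2*t*γ)*(γ+1)^2 := by
  have hn1 : (1:ℝ) ≤ (n:ℝ) := by exact_mod_cast hn
  have hn0 : (0:ℝ) < (n:ℝ) := by linarith
  have hγ1 : 1 < γ := by
    have : 0 < 3/(n:ℝ) := by positivity
    linarith
  have hδ : 0 < γ - 1 := by linarith
  have hγ0 : (0:ℝ) < γ := by linarith
  have h3 : 3 < (n:ℝ)*(γ-1) := by
    have h := (div_lt_iff₀ hn0).mp (show 3/(n:ℝ) < γ - 1 by linarith)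
    nlinarith [h]
  have e1 : 9 ≤ (n:ℝ)^2*(γ-1)^2 := by nlinarith [h3]
  have e2 : 3*((n:ℝ)*(γ-1)) ≤ (n:ℝ)^2*(γ-1)^2 := by nlinarith [h3, mul_pos hn0 hδ]
  have e3 : (γ-1) ≤ (n:ℝ)*(γ-1) := by
    nlinarith [mul_nonneg (show (0:ℝ) ≤ (n:ℝ)-1 by linarith) hδ.le]
  have e4 : 3*(γ-1) ≤ (n:ℝ)*(γ-1)^2 := by
    nlinarith [mul_nonneg (show (0:ℝ) ≤ (n:ℝ)*(γ-1)-3 by linarith) hδ.le]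
  have hkey : 0 < (n:ℝ)*((n:ℝ)+1)*(γ-1)^2 - 4 - 4*(γ-1) := by nlinarith [e1, e2, e3, e4]
  have hX : (0:ℝ) < (γ+1)^2 := by positivity
  have hh : 0 < 2*(n:ℝ)*((n:ℝ)+1)*((γ+1)^2)^2 - 4*γ*(γ+1)^2 - 8*γ^2
      - 2*(2*(n:ℝ)+1)^2*γ*(γ+1)^2 := by
    nlinarith [mul_pos hX hkey, mul_nonneg hγ0.le (sq_nonneg (γ-1))]
  have h1t2 : (0:ℝ) ≤ 1 - t^2 := by nlinarith
  have g1 : 0 < γ*(γ+1)^2*(1-t) := by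
    exact mul_pos (mul_pos hγ0 hX) (by linarith)
  have g2 : (0:ℝ) ≤ γ^2*(1-t^2) := mul_nonneg (sq_nonneg γ) h1t2
  have g3 : (0:ℝ) ≤ (2*(n:ℝ)+1)^2*((γ+1)^2*(γ*(1-t^2))) :=
    mul_nonneg (sq_nonneg _) (mul_nonneg hX.le (mul_nonneg hγ0.le h1t2))
  nlinarith [hh, g1, g2, g3]

lemma negn {t γ : ℝ} (ht0 : 0 < t) (ht1 : t < 1) {n : ℕ} (hn : 1 ≤ n)
    (hγ : 1 + 3/(n:ℝ) < γ) :
    (γ+1)*(2*t*γ*(1+t) + ((n:ℝ)+1)*((γ+1)^2 - 4*t^2*γ))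
      - Sf t γ * (2*t*γ + ((n:ℝ)+1)*(γ+1)^2) < 0 := by
  have hn0 : (0:ℝ) < (n:ℝ) := by exact_mod_cast Nat.pos_of_ne_zero (by omega)
  have hγ1 : 1 < γ := by
    have : 0 < 3/(n:ℝ) := by positivity
    linarith
  have hγ0 : (0:ℝ) < γ := by linarith
  have hs := S_pos ht0 ht1 hγ1
  have hsq := sqidn (Sf t γ) t γ n (S_sq ht0 ht1 hγ1)
  have hC := Cpos ht0 ht1 hn hγ
  have hQ : 0 < 2*t*γ + ((n:ℝ)+1)*(γ+1)^2 := by nlinarith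
  have hsQ : 0 < Sf t γ * (2*t*γ + ((n:ℝ)+1)*(γ+1)^2) := mul_pos hs hQ
  have hrhs : 0 < t*(2*t*γ)*(2*(2*t*γ + ((n:ℝ)+1)*(γ+1)^2)*((n:ℝ)*(γ+1)^2 - 2*t*γ)
      - (2*(n:ℝ)+1)^2*t*(2*t*γ)*(γ+1)^2) := by
    have h1 : 0 < t*(2*t*γ) := by positivity
    exact mul_pos h1 hC
  exact sq_helper2 hsq hrhs hsQ

lemma Gf_pos {t γ : ℝ} (ht0 : 0 < t) (ht1 : t < 1) (hγ : 1 < γ) (n : ℕ) :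
    0 < Gf t n γ :=
  div_pos (A_pos ht0 ht1 hγ)
    (mul_pos (B_pos ht0 ht1 hγ) (pow_pos (by linarith) _))

lemma Gf_mono {t : ℝ} (ht0 : 0 < t) (ht1 : t < 1) : StrictMonoOn (Gf t 0) (Ioi 1) := by
  apply strictMonoOn_of_deriv_pos (convex_Ioi 1)
  · intro x hx
    exact ((hasDeriv_G ht0 ht1 hx 0).differentiableAt).continuousAt.continuousWithinAt
  · intro x hx
    rw [interior_Ioi] at hx
    have hx1 : (1:ℝ) < x := hx
    rw [(hasDeriv_G ht0 ht1 hx1 0).deriv]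
    have hs := S_pos ht0 ht1 hx1
    have hx0 : (0:ℝ) < x := by linarith
    apply div_pos
    · rw [num_eq ht0 ht1 hx1 0]
      apply div_pos _ hs
      simp only [Nat.cast_zero, zero_add, one_mul, pow_zero]
      have hD := pos0 ht0 ht1 hx1
      nlinarith [hD]
    · exact pow_pos (mul_pos (B_pos ht0 ht1 hx1) (pow_pos hx0 _)) 2

lemma Gf_anti {t : ℝ} (ht0 : 0 < t) (ht1 : t < 1) {n : ℕ} (hn : 1 ≤ n) :
    StrictAntiOn (Gf t n) (Ioi (1 + 3/(n:ℝ))) := by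
  have hn0 : (0:ℝ) < (n:ℝ) := by exact_mod_cast Nat.pos_of_ne_zero (by omega)
  have hq : (0:ℝ) < 3/(n:ℝ) := by positivity
  apply strictAntiOn_of_deriv_neg (convex_Ioi _)
  · intro x hx
    have hx1 : (1:ℝ) < x := by have : 1 + 3/(n:ℝ) < x := hx; linarith
    exact ((hasDeriv_G ht0 ht1 hx1 n).differentiableAt).continuousAt.continuousWithinAt
  · intro x hx
    rw [interior_Ioi] at hx
    have hxg : 1 + 3/(n:ℝ) < x := hx
    have hx1 : (1:ℝ) < x := by linarith
    have hs := S_pos ht0 ht1 hx1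
    have hx0 : (0:ℝ) < x := by linarith
    rw [(hasDeriv_G ht0 ht1 hx1 n).deriv]
    apply div_neg_of_neg_of_pos
    · rw [num_eq ht0 ht1 hx1 n]
      apply div_neg_of_neg_of_pos _ hs
      have hD := negn ht0 ht1 hn hxg
      have h2 : 0 < (2:ℝ)*(1-t) := by linarith
      have hp : (0:ℝ) < x^n := pow_pos hx0 n
      nlinarith [mul_pos h2 (neg_pos.2 hD), mul_pos hp (mul_pos h2 (neg_pos.2 hD))]
    · exact pow_pos (mul_pos (B_pos ht0 ht1 hx1) (pow_pos hx0 _)) 2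

lemma W_eq {π0 κ γ : ℝ} (hκ : 1 < κ) (hγ : 1 < γ) (n : ℕ) :
    W π0 n γ κ = 1 / (1 + ((1 - π0)/π0) * Gf ((κ-1)/κ) n γ) := by
  have hκ0 : (0:ℝ) < κ := by linarith
  have hκne : κ ≠ 0 := ne_of_gt hκ0
  have ht0 : 0 < (κ-1)/κ := div_pos (by linarith) hκ0
  have ht1 : (κ-1)/κ < 1 := by rw [div_lt_one hκ0]; linarith
  set t := (κ-1)/κ with htdef
  have hγ0 : (0:ℝ) < γ := by linarith
  have hγ1 : (0:ℝ) < γ + 1 := by linarith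
  have hγ1ne : γ + 1 ≠ 0 := ne_of_gt hγ1
  have hB := B_pos ht0 ht1 hγ
  have hq : 1 - 4*(γ*(κ-1)/((γ+1)*κ))*((κ-1)/((γ+1)*κ)) = ((γ+1)^2 - 4*t^2*γ)/(γ+1)^2 := by
    rw [htdef]
    field_simp
  have hsqrt : Real.sqrt (1 - 4*(γ*(κ-1)/((γ+1)*κ))*((κ-1)/((γ+1)*κ))) = Sf t γ/(γ+1) := by
    rw [hq, Real.sqrt_div (sig_pos ht0 ht1 hγ).le, Real.sqrt_sq hγ1.le, Sf]
  have hzpow : γ ^ (-(n + 1 : ℤ)) = (γ ^ (n+1))⁻¹ := by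
    rw [zpow_neg]
    norm_cast
  show 1 / (1 + ((1 - π0) / π0) *
      ((γ * (κ - 1) / ((γ + 1) * κ) -
        (1 - Real.sqrt (1 - 4 * (γ * (κ - 1) / ((γ + 1) * κ)) * ((κ - 1) / ((γ + 1) * κ)))) / 2) /
       ((κ - 1) / ((γ + 1) * κ) -
        (1 - Real.sqrt (1 - 4 * (γ * (κ - 1) / ((γ + 1) * κ)) * ((κ - 1) / ((γ + 1) * κ)))) / 2)) *
      γ ^ (-(n + 1 : ℤ))) = _
  rw [hsqrt, hzpow]
  have hpα : γ * (κ - 1) / ((γ + 1) * κ) - (1 - Sf t γ/(γ+1))/2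
      = (Sf t γ + 2*t*γ - γ - 1)/(2*(γ+1)) := by
    rw [htdef]
    field_simp
    ring
  have hqα : (κ - 1) / ((γ + 1) * κ) - (1 - Sf t γ/(γ+1))/2
      = (Sf t γ + 2*t - γ - 1)/(2*(γ+1)) := by
    rw [htdef]
    field_simp
    ring
  rw [hpα, hqα]
  congr 1
  congr 1
  rw [Gf, mul_assoc]
  congr 1
  have hBne : (Sf t γ + 2*t - γ - 1) ≠ 0 := ne_of_gt hB
  have hpne : (γ:ℝ)^(n+1) ≠ 0 := by positivity
  field_simp

/-- Proposition 7(2): (i) for `n = 0` the value is strictly decreasing in the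
informativeness `γ` on `(1, ∞)` for every `κ > 1`; (ii) for every `n ≥ 1`
there is a threshold `γ̂(n) > 1` such that for every `κ > 1` the value is
strictly increasing in `γ` on `(γ̂(n), ∞)`, and the thresholds can be chosen
with `γ̂(n) → 1` as `n → ∞`. -/
theorem stmt_18 (π0 : ℝ) (h0 : 0 < π0) (h1 : π0 < 1) :
    (∀ κ : ℝ, 1 < κ → StrictAntiOn (fun γ => W π0 0 γ κ) (Set.Ioi (1 : ℝ))) ∧
    ∃ γhat : ℕ → ℝ,
      (∀ n : ℕ, 1 ≤ n → 1 < γhat n ∧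
        ∀ κ : ℝ, 1 < κ → StrictMonoOn (fun γ => W π0 n γ κ) (Set.Ioi (γhat n))) ∧
      Filter.Tendsto γhat Filter.atTop (nhds 1) := by
  have hc : 0 < (1 - π0)/π0 := div_pos (by linarith) h0
  constructor
  · intro κ hκ γ₁ hγ₁ γ₂ hγ₂ h12
    have hκ0 : (0:ℝ) < κ := by linarith
    have ht0 : 0 < (κ-1)/κ := div_pos (by linarith) hκ0
    have ht1 : (κ-1)/κ < 1 := by rw [div_lt_one hκ0]; linarith
    have h₁ : (1:ℝ) < γ₁ := hγ₁
    have h₂ : (1:ℝ) < γ₂ := hγ₂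
    simp only
    rw [W_eq hκ h₁ 0, W_eq hκ h₂ 0]
    have hG := Gf_mono ht0 ht1 hγ₁ hγ₂ h12
    have hG1 := Gf_pos ht0 ht1 h₁ 0
    apply one_div_lt_one_div_of_lt
    · nlinarith [mul_pos hc hG1]
    · have := mul_lt_mul_of_pos_left hG hc
      linarith
  · refine ⟨fun n => 1 + 3/(n:ℝ), fun n hn => ⟨?_, ?_⟩, ?_⟩
    · have hn0 : (0:ℝ) < (n:ℝ) := by exact_mod_cast Nat.pos_of_ne_zero (by omega)
      have : 0 < 3/(n:ℝ) := by positivity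
      linarith
    · intro κ hκ γ₁ hγ₁ γ₂ hγ₂ h12
      have hn0 : (0:ℝ) < (n:ℝ) := by exact_mod_cast Nat.pos_of_ne_zero (by omega)
      have hq : 0 < 3/(n:ℝ) := by positivity
      have hκ0 : (0:ℝ) < κ := by linarith
      have ht0 : 0 < (κ-1)/κ := div_pos (by linarith) hκ0
      have ht1 : (κ-1)/κ < 1 := by rw [div_lt_one hκ0]; linarith
      have hg₁ : 1 + 3/(n:ℝ) < γ₁ := hγ₁
      have hg₂ : 1 + 3/(n:ℝ) < γ₂ := hγ₂
      have h₁ : (1:ℝ) < γ₁ := by linarith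
      have h₂ : (1:ℝ) < γ₂ := by linarith
      simp only
      rw [W_eq hκ h₁ n, W_eq hκ h₂ n]
      have hG := Gf_anti ht0 ht1 hn hγ₁ hγ₂ h12
      have hG2 := Gf_pos ht0 ht1 h₂ n
      apply one_div_lt_one_div_of_lt
      · nlinarith [mul_pos hc hG2]
      · have := mul_lt_mul_of_pos_left hG hc
        linarith
    · have h := (tendsto_const_div_atTop_nhds_zero_nat 3).const_add (1:ℝ)
      simpa using h
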